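/- Let (X, τ, 𝒫) be a compact and tight general space and let R_τ be the specialization preorder of X. Then 𝒫 is closed under the operation A ↦ R_τ⁻¹(A), and the triple (X, R_τ, 𝒫) is a tight general S4-frame: whenever x ∉ closure {y}, there exists A ∈ 𝒫 with y ∈ A and x ∉ R_τ⁻¹(A). -/

import Mathlib

open Set TopologicalSpace

/-- Let `(X, τ, 𝒫)` be a compact and tight general space and let `R_τ` be the
specialization preorder of `X` (`x R_τ y` iff `x ∈ closure {y}`). Then `𝒫` is closed under the
operation `A ↦ R_τ⁻¹(A)`, and `(X, R_τ, 𝒫)` is a tight general S4-frame: whenever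
`x ∉ closure {y}` there is `A ∈ 𝒫` with `y ∈ A` and `x ∉ R_τ⁻¹(A)`. -/
theorem statement1 {X : Type*} [TopologicalSpace X] (P : Set (Set X))
    (hempty : (∅ : Set X) ∈ P) (huniv : (univ : Set X) ∈ P)
    (hunion : ∀ A ∈ P, ∀ B ∈ P, A ∪ B ∈ P)
    (hcompl : ∀ A ∈ P, Aᶜ ∈ P)
    (hclosure : ∀ A ∈ P, closure A ∈ P)
    (hcompact : ∀ F ⊆ P, (∀ G ⊆ F, G.Finite → (⋂₀ G).Nonempty) → (⋂₀ F).Nonempty)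
    (htight : IsTopologicalBasis {A | A ∈ P ∧ IsOpen A}) :
    (∀ A ∈ P, {w : X | ∃ v ∈ A, w ∈ closure {v}} ∈ P) ∧
    (∀ x y : X, x ∉ closure {y} →
      ∃ A ∈ P, y ∈ A ∧ x ∉ {w : X | ∃ v ∈ A, w ∈ closure {v}}) := by
  have key : ∀ A ∈ P, {w : X | ∃ v ∈ A, w ∈ closure {v}} = closure A := by
    intro A hA
    apply Subset.antisymm
    · rintro w ⟨v, hv, hw⟩
      exact closure_mono (singleton_subset_iff.2 hv) hw
    · intro w hw
      set F : Set (Set X) := insert A {U | U ∈ P ∧ IsOpen U ∧ w ∈ U} with hF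
      have hFP : F ⊆ P := by
        rintro U (rfl | ⟨hU, _, _⟩)
        · exact hA
        · exact hU
      have hfip : ∀ G ⊆ F, G.Finite → (⋂₀ G).Nonempty := by
        intro G hG hGfin
        have hopen : IsOpen (⋂₀ (G \ {A})) := by
          apply Set.Finite.isOpen_sInter (hGfin.diff)
          intro U hU
          rcases hG hU.1 with rfl | ⟨_, h, _⟩
          · exact absurd rfl hU.2
          · exact h
        have hwmem : w ∈ ⋂₀ (G \ {A}) := by
          intro U hU
          rcases hG hU.1 with rfl | ⟨_, _, h⟩
          · exact absurd rfl hU.2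
          · exact h
        by_cases hAG : A ∈ G
        · rcases mem_closure_iff.1 hw _ hopen hwmem with ⟨v, hv1, hv2⟩
          refine ⟨v, fun U hU => ?_⟩
          by_cases h : U = A
          · exact h ▸ hv2
          · exact hv1 U ⟨hU, h⟩
        · exact ⟨w, fun U hU => hwmem U ⟨hU, fun h => hAG (h ▸ hU)⟩⟩
      rcases hcompact F hFP hfip with ⟨v, hv⟩
      refine ⟨v, hv A (mem_insert _ _), ?_⟩
      rw [htight.mem_closure_iff]
      intro o ho hwo
      exact ⟨v, hv o (mem_insert_of_mem _ ⟨ho.1, ho.2, hwo⟩), rfl⟩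
  constructor
  · intro A hA
    rw [key A hA]
    exact hclosure A hA
  · intro x y hxy
    obtain ⟨B, hB, hxB, hBsub⟩ :=
      htight.exists_subset_of_mem_open hxy (isOpen_compl_iff.2 isClosed_closure)
    refine ⟨Bᶜ, hcompl B hB.1, fun hyB => (hBsub hyB) (subset_closure rfl), ?_⟩
    rintro ⟨v, hv, hxv⟩
    rcases mem_closure_iff.1 hxv B hB.2 hxB with ⟨z, hzB, hz⟩
    exact hv (hz ▸ hzB)
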